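/- Each of the five vectors l₁ = (1,0,1,1,1), l₂ = (0,1,0,1,1), l₃ = (0,0,1,1,1), l₄ = (0,0,0,−1,1), l₅ = (1,1,0,3,1) in ℝ^5 spans an extremal ray of the convex cone C generated by {l₁,…,l₅}; i.e., for each i, lᵢ is not a nonnegative linear combination of the other four vectors. -/

import Mathlib

open Finset

/-- The convex cone generated by a set: all finite nonnegative linear combinations. -/
def coneGen {V : Type*} [AddCommGroup V] [Module ℝ V] (S : Set V) : Set V :=
  {x | ∃ (n : ℕ) (c : Fin n → ℝ) (v : Fin n → V),
    (∀ i, 0 ≤ c i) ∧ (∀ i, v i ∈ S) ∧ x = ∑ i, c i • v i}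

/-- A cone is salient if it contains no line. -/
def IsSalient {V : Type*} [AddCommGroup V] [Module ℝ V] (C : Set V) : Prop :=
  ∀ x ∈ C, -x ∈ C → x = 0

/-- A nonzero vector spans an extremal ray of the cone `C`. -/
def IsExtremalVec {V : Type*} [AddCommGroup V] [Module ℝ V] (C : Set V) (v : V) : Prop :=
  v ≠ 0 ∧ v ∈ C ∧ ∀ x y, x ∈ C → y ∈ C → v = x + y →
    (∃ a : ℝ, 0 ≤ a ∧ x = a • v) ∧ (∃ b : ℝ, 0 ≤ b ∧ y = b • v)

def L5 : Fin 5 → (Fin 5 → ℝ) :=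
  ![![1, 0, 1, 1, 1],
    ![0, 1, 0, 1, 1],
    ![0, 0, 1, 1, 1],
    ![0, 0, 0, -1, 1],
    ![1, 1, 0, 3, 1]]


/-- Auxiliary linear functional given by dot product with `w`. -/
noncomputable def phiW (w : Fin 5 → ℝ) : (Fin 5 → ℝ) →ₗ[ℝ] ℝ :=
  ∑ k, w k • LinearMap.proj k

lemma phiW_apply (w x : Fin 5 → ℝ) : phiW w x = ∑ k, w k * x k := by
  simp [phiW]

lemma mem_cone_self (i : Fin 5) : L5 i ∈ coneGen (Set.range L5) := by
  exact ⟨1, fun _ => 1, fun _ => L5 i, fun _ => zero_le_one, fun _ => ⟨i, rfl⟩, by simp⟩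

lemma key_of_cert (i : Fin 5) (w : Fin 5 → ℝ)
    (hne : L5 i ≠ 0)
    (h0 : phiW w (L5 i) = 0) (hpos : ∀ j, j ≠ i → 0 < phiW w (L5 j)) :
    IsExtremalVec (coneGen (Set.range L5)) (L5 i) ∧
      ¬ ∃ c : Fin 5 → ℝ, (∀ j, 0 ≤ c j) ∧ c i = 0 ∧ L5 i = ∑ j, c j • L5 j := by
  have hnn : ∀ j, 0 ≤ phiW w (L5 j) := by
    intro j
    by_cases h : j = i
    · rw [h, h0]
    · exact (hpos j h).le
  -- every cone element has nonneg phi, and phi = 0 forces multiple of L5 i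
  have key : ∀ x ∈ coneGen (Set.range L5),
      0 ≤ phiW w x ∧ (phiW w x = 0 → ∃ a : ℝ, 0 ≤ a ∧ x = a • L5 i) := by
    rintro x ⟨n, c, v, hc, hv, rfl⟩
    choose f hf using hv
    have hterm : ∀ k, phiW w (c k • v k) = c k * phiW w (L5 (f k)) := by
      intro k; rw [← hf k, map_smul, smul_eq_mul]
    have hsum : phiW w (∑ k, c k • v k) = ∑ k, c k * phiW w (L5 (f k)) := by
      rw [map_sum]; exact Finset.sum_congr rfl fun k _ => hterm k
    have htnn : ∀ k ∈ Finset.univ (α := Fin n), 0 ≤ c k * phiW w (L5 (f k)) :=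
      fun k _ => mul_nonneg (hc k) (hnn (f k))
    constructor
    · rw [hsum]; exact Finset.sum_nonneg htnn
    · intro hz
      rw [hsum] at hz
      have hzero := (Finset.sum_eq_zero_iff_of_nonneg htnn).mp hz
      refine ⟨∑ k, (if f k = i then c k else 0), Finset.sum_nonneg fun k _ => ?_, ?_⟩
      · split
        · exact hc k
        · exact le_rfl
      · rw [Finset.sum_smul]
        refine Finset.sum_congr rfl fun k _ => ?_
        by_cases h : f k = i
        · rw [if_pos h, ← hf k, h]
        · have : c k = 0 := by
            have := hzero k (Finset.mem_univ k)
            rcases mul_eq_zero.mp this with h1 | h1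
            · exact h1
            · exact absurd h1 (ne_of_gt (hpos (f k) h))
          rw [if_neg h, this, zero_smul, zero_smul]
  constructor
  · refine ⟨hne, mem_cone_self i, ?_⟩
    intro x y hx hy hv
    have hphix := key x hx
    have hphiy := key y hy
    have hsum : phiW w x + phiW w y = 0 := by
      rw [← map_add]; rw [← hv]; exact h0
    have hx0 : phiW w x = 0 := le_antisymm (by linarith [hphiy.1]) hphix.1
    have hy0 : phiW w y = 0 := by linarith
    exact ⟨hphix.2 hx0, hphiy.2 hy0⟩
  · rintro ⟨c, hc, hci, hrep⟩
    have h1 : (0:ℝ) = ∑ j, c j * phiW w (L5 j) := by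
      rw [← h0, hrep, map_sum]
      exact Finset.sum_congr rfl fun j _ => by rw [map_smul, smul_eq_mul]
    have hzero := (Finset.sum_eq_zero_iff_of_nonneg
      (fun j _ => mul_nonneg (hc j) (hnn j))).mp h1.symm
    have hcall : ∀ j, c j = 0 := by
      intro j
      by_cases h : j = i
      · rw [h, hci]
      · rcases mul_eq_zero.mp (hzero j (Finset.mem_univ j)) with h1 | h1
        · exact h1
        · exact absurd h1 (ne_of_gt (hpos j h))
    apply hne
    rw [hrep]
    exact Finset.sum_eq_zero fun j _ => by rw [hcall j]; simp

theorem each_of_five_is_extremal :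
    ∀ i : Fin 5, IsExtremalVec (coneGen (Set.range L5)) (L5 i) ∧
      ¬ ∃ c : Fin 5 → ℝ, (∀ j, 0 ≤ c j) ∧ c i = 0 ∧ L5 i = ∑ j, c j • L5 j := by
  intro i
  fin_cases i
  · exact key_of_cert 0 ![-3, -3, -2, 2, 3]
      (fun h => by have : L5 0 4 = 0 := congrFun h 4; rw [show L5 0 4 = 1 from rfl] at this; exact one_ne_zero this)
      (by simp [phiW_apply, L5, Fin.sum_univ_five] <;> norm_num)
      (by intro j hj; fin_cases j <;> first | exact absurd rfl hj | (simp [phiW_apply, L5, Fin.sum_univ_five] <;> norm_num))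
  · exact key_of_cert 1 ![-1, -3, -1, 1, 2]
      (fun h => by have : L5 1 4 = 0 := congrFun h 4; rw [show L5 1 4 = 1 from rfl] at this; exact one_ne_zero this)
      (by simp [phiW_apply, L5, Fin.sum_univ_five] <;> norm_num)
      (by intro j hj; fin_cases j <;> first | exact absurd rfl hj | (simp [phiW_apply, L5, Fin.sum_univ_five] <;> norm_num))
  · exact key_of_cert 2 ![1, -2, -3, 0, 3]
      (fun h => by have : L5 2 4 = 0 := congrFun h 4; rw [show L5 2 4 = 1 from rfl] at this; exact one_ne_zero this)
      (by simp [phiW_apply, L5, Fin.sum_univ_five] <;> norm_num)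
      (by intro j hj; fin_cases j <;> first | exact absurd rfl hj | (simp [phiW_apply, L5, Fin.sum_univ_five] <;> norm_num))
  · exact key_of_cert 3 ![-3, -3, -2, 3, 3]
      (fun h => by have : L5 3 4 = 0 := congrFun h 4; rw [show L5 3 4 = 1 from rfl] at this; exact one_ne_zero this)
      (by simp [phiW_apply, L5, Fin.sum_univ_five] <;> norm_num)
      (by intro j hj; fin_cases j <;> first | exact absurd rfl hj | (simp [phiW_apply, L5, Fin.sum_univ_five] <;> norm_num))
  · exact key_of_cert 4 ![-3, -3, 0, 1, 3]
      (fun h => by have : L5 4 4 = 0 := congrFun h 4; rw [show L5 4 4 = 1 from rfl] at this; exact one_ne_zero this)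
      (by simp [phiW_apply, L5, Fin.sum_univ_five] <;> norm_num)
      (by intro j hj; fin_cases j <;> first | exact absurd rfl hj | (simp [phiW_apply, L5, Fin.sum_univ_five] <;> norm_num))
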